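/- Let G be a group with a filtration G_• of degree at most s, and let g ∈ poly(Z, G_•) satisfy the stronger condition that ∂_{h_i}⋯∂_{h_1} g(n) ∈ G_{i+1} for all i ≥ 0 and all h₁,…,h_i, n ∈ Z. Then every Taylor coefficient g_i of g lies in G_{i+1}. -/

import Mathlib

/-- The discrete derivative `∂_h g (n) = g(n+h) g(n)⁻¹`. -/
def discDeriv {G : Type*} [Group G] (h : ℤ) (g : ℤ → G) : ℤ → G :=
  fun n => g (n + h) * (g n)⁻¹

/-- `g : ℤ → G` is a polynomial sequence adapted to `Gf` if every iterated discrete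
derivative of order `i` takes values in `Gf i`. -/
def IsPolySeq {G : Type*} [Group G] (Gf : ℕ → Subgroup G) (g : ℤ → G) : Prop :=
  ∀ (hs : List ℤ) (n : ℤ), (hs.foldr discDeriv g) n ∈ Gf hs.length

/-- The binomial coefficient `C(n, k)` for an integer `n` (the division is exact). -/
def zchoose (n : ℤ) (k : ℕ) : ℤ :=
  (∏ i ∈ Finset.range k, (n - (i : ℤ))) / (k.factorial : ℤ)

open scoped commutatorElement

namespace TaylorProof

/-! ### Integer binomial coefficients -/

def dprod (n : ℤ) (k : ℕ) : ℤ := ∏ i ∈ Finset.range k, (n - (i : ℤ))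

lemma dprod_succ (n : ℤ) (k : ℕ) : dprod n (k+1) = dprod n k * (n - k) :=
  Finset.prod_range_succ _ _

lemma dprod_succ_left (n : ℤ) (k : ℕ) : dprod (n+1) (k+1) = (n+1) * dprod n k := by
  unfold dprod
  rw [Finset.prod_range_succ']
  have : ∀ i ∈ Finset.range k, (n + 1 - ((i:ℕ)+1 : ℕ)) = n - i := by
    intro i _; push_cast; ring
  rw [Finset.prod_congr rfl this]
  simp [mul_comm]

lemma dprod_pascal (n : ℤ) (k : ℕ) :
    dprod (n+1) (k+1) = dprod n (k+1) + (k+1) * dprod n k := by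
  rw [dprod_succ_left, dprod_succ]; push_cast; ring

lemma dprod_zero_left (k : ℕ) : dprod 0 (k+1) = 0 := by
  apply Finset.prod_eq_zero (Finset.mem_range.mpr (Nat.succ_pos k))
  simp

lemma fact_dvd_dprod (k : ℕ) : ∀ n : ℤ, ((k.factorial : ℤ)) ∣ dprod n k := by
  induction k with
  | zero => intro n; simp [dprod]
  | succ k ih =>
    intro n
    induction n using Int.induction_on with
    | zero => rw [dprod_zero_left]; exact dvd_zero _
    | succ i hi =>
      rw [dprod_pascal]
      refine dvd_add hi ?_
      rw [Nat.factorial_succ]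
      push_cast
      exact mul_dvd_mul_left _ (ih _)
    | pred i hi =>
      have h := dprod_pascal (-(i:ℤ) - 1) k
      have h2 : (-(i:ℤ) - 1) + 1 = -(i:ℤ) := by ring
      rw [h2] at h
      have : dprod (-(i:ℤ) - 1) (k+1) = dprod (-(i:ℤ)) (k+1) - (k+1) * dprod (-(i:ℤ)-1) k := by
        rw [h]; ring
      rw [this]
      refine dvd_sub hi ?_
      rw [Nat.factorial_succ]; push_cast
      exact mul_dvd_mul_left _ (ih _)

lemma fact_mul_zchoose (n : ℤ) (k : ℕ) :
    (k.factorial : ℤ) * zchoose n k = dprod n k :=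
  Int.mul_ediv_cancel' (fact_dvd_dprod k n)

lemma zchoose_pascal (n : ℤ) (k : ℕ) :
    zchoose (n+1) (k+1) = zchoose n (k+1) + zchoose n k := by
  have hne : ((k+1).factorial : ℤ) ≠ 0 := by
    exact_mod_cast (Nat.factorial_pos (k+1)).ne'
  apply mul_left_cancel₀ hne
  rw [mul_add, fact_mul_zchoose, fact_mul_zchoose, dprod_pascal]
  congr 1
  rw [Nat.factorial_succ]
  push_cast
  rw [mul_assoc, fact_mul_zchoose]

lemma zchoose_zero_right (n : ℤ) : zchoose n 0 = 1 := by
  simp [zchoose]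

lemma zchoose_zero_left (k : ℕ) : zchoose 0 (k+1) = 0 := by
  unfold zchoose
  rw [show (∏ i ∈ Finset.range (k+1), ((0:ℤ) - (i : ℤ))) = dprod 0 (k+1) from rfl,
    dprod_zero_left]
  simp

/-! ### Differences of integer sequences -/

def ΔZ (p : ℤ → ℤ) : ℤ → ℤ := fun n => p (n+1) - p n

def DegLe (d : ℕ) (p : ℤ → ℤ) : Prop := ΔZ^[d+1] p = fun _ => 0

lemma ΔZ_zchoose (k : ℕ) : ΔZ (fun n => zchoose n (k+1)) = fun n => zchoose n k := by
  funext n; simp [ΔZ, zchoose_pascal]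

lemma ΔZ_zchoose_zero : ΔZ (fun n => zchoose n 0) = fun _ => 0 := by
  funext n; simp [ΔZ, zchoose_zero_right]

lemma iter_ΔZ_zchoose (k : ℕ) : ΔZ^[k] (fun n => zchoose n k) = fun n => zchoose n 0 := by
  induction k with
  | zero => rfl
  | succ k ih => rw [Function.iterate_succ_apply, ΔZ_zchoose, ih]

lemma degLe_zchoose (k : ℕ) : DegLe k (fun n => zchoose n k) := by
  unfold DegLe
  rw [Function.iterate_succ_apply', iter_ΔZ_zchoose, ΔZ_zchoose_zero]

lemma DegLe.step {d : ℕ} {p : ℤ → ℤ} (h : DegLe (d+1) p) : DegLe d (ΔZ p) := by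
  unfold DegLe at h ⊢
  rw [← Function.iterate_succ_apply]
  exact h

lemma DegLe.zero_eq {p : ℤ → ℤ} (h : DegLe 0 p) : ΔZ p = fun _ => 0 := by
  unfold DegLe at h
  rwa [Function.iterate_one] at h

end TaylorProof

namespace TaylorProof

/-! ### The class of adapted expressions -/

section Good

variable {G : Type*} [Group G]

/-- Expressions built from power functions `n ↦ x ^ p n` (where `x ∈ Gf w` and
`p` has degree `≤ w - m`), closed under product, inverse, conjugation, commutator,
shift and weakening of the class `m`. -/
inductive Good (Gf : ℕ → Subgroup G) : ℕ → (ℤ → G) → Prop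
  | one (m : ℕ) : Good Gf m (fun _ => 1)
  | pow {m w d : ℕ} (x : G) (p : ℤ → ℤ) (hx : x ∈ Gf w) (hp : DegLe d p)
      (hmd : m + d ≤ w) : Good Gf m (fun n => x ^ p n)
  | mul {m : ℕ} {f g : ℤ → G} (hf : Good Gf m f) (hg : Good Gf m g) :
      Good Gf m (fun n => f n * g n)
  | inv {m : ℕ} {f : ℤ → G} (hf : Good Gf m f) : Good Gf m (fun n => (f n)⁻¹)
  | conj {k m : ℕ} {φ f : ℤ → G} (hφ : Good Gf k φ) (hf : Good Gf m f) :
      Good Gf m (fun n => φ n * f n * (φ n)⁻¹)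
  | comm {m₁ m₂ : ℕ} {f g : ℤ → G} (hf : Good Gf m₁ f) (hg : Good Gf m₂ g) :
      Good Gf (m₁ + m₂) (fun n => ⁅f n, g n⁆)
  | shift {m : ℕ} {f : ℤ → G} (h : ℤ) (hf : Good Gf m f) :
      Good Gf m (fun n => f (n + h))
  | weaken {m m' : ℕ} {f : ℤ → G} (hf : Good Gf m f) (hle : m' ≤ m) : Good Gf m' f

variable {Gf : ℕ → Subgroup G}

lemma Good.congr {m : ℕ} {f g : ℤ → G} (hf : Good Gf m f) (hfg : f = g) :
    Good Gf m g := hfg ▸ hf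

section GfFacts

lemma Gf_mono (hmono : ∀ i, Gf (i + 1) ≤ Gf i) : ∀ {a b : ℕ}, a ≤ b → Gf b ≤ Gf a := by
  intro a b hab
  induction b with
  | zero => rw [Nat.le_zero.mp hab]
  | succ b ih =>
    rcases Nat.lt_or_ge a (b+1) with h | h
    · exact le_trans (hmono b) (ih (Nat.lt_succ_iff.mp h))
    · rw [Nat.le_antisymm hab h]

lemma Gf_normal (h1 : Gf 1 = ⊤) (hmono : ∀ i, Gf (i + 1) ≤ Gf i)
    (hcomm : ∀ i j, ⁅Gf i, Gf j⁆ ≤ Gf (i + j)) (j : ℕ) (y x : G) (hx : x ∈ Gf j) : y * x * y⁻¹ ∈ Gf j := by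
  have h : y * x * y⁻¹ = ⁅y, x⁆ * x := by group
  rw [h]
  refine mul_mem ?_ hx
  have hy : y ∈ Gf 1 := by rw [h1]; trivial
  exact Gf_mono hmono (Nat.le_add_left j 1) (hcomm 1 j (Subgroup.commutator_mem_commutator hy hx))

lemma Good.values (h1 : Gf 1 = ⊤) (hmono : ∀ i, Gf (i + 1) ≤ Gf i)
    (hcomm : ∀ i j, ⁅Gf i, Gf j⁆ ≤ Gf (i + j)) {m : ℕ} {f : ℤ → G} (hf : Good Gf m f) : ∀ n, f n ∈ Gf m := by
  induction hf with
  | one m => intro n; exact one_mem _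
  | pow x p hx hp hmd =>
    intro n
    exact Gf_mono hmono (le_trans (Nat.le_add_right _ _) hmd) (Subgroup.zpow_mem _ hx _)
  | mul hf hg ihf ihg => intro n; exact mul_mem (ihf n) (ihg n)
  | inv hf ihf => intro n; exact inv_mem (ihf n)
  | conj hφ hf ihφ ihf => intro n; exact Gf_normal h1 hmono hcomm _ _ _ (ihf n)
  | comm hf hg ihf ihg =>
    intro n
    exact hcomm _ _ (Subgroup.commutator_mem_commutator (ihf n) (ihg n))
  | shift h hf ihf => intro n; exact ihf (n + h)
  | weaken hf hle ihf => intro n; exact Gf_mono hmono hle (ihf n)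

end GfFacts

/-- The key closure property: the discrete derivative of a `Good` expression of class `m`
is `Good` of class `m + 1`. -/
lemma Good.delta {m : ℕ} {f : ℤ → G} (hf : Good Gf m f) :
    Good Gf (m + 1) (fun n => f (n + 1) * (f n)⁻¹) := by
  induction hf with
  | one m =>
    exact (Good.one (m+1)).congr (by funext n; simp)
  | @pow m w d x p hx hp hmd =>
    match d, hp, hmd with
    | 0, hp, hmd =>
      refine (Good.one (m+1)).congr ?_
      funext n
      have h0 : p (n+1) - p n = 0 := by
        have := congrFun hp.zero_eq n
        simpa [ΔZ] using this
      rw [← zpow_sub, h0, zpow_zero]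
    | (d+1), hp, hmd =>
      refine (Good.pow x (ΔZ p) hx hp.step (by omega)).congr ?_
      funext n
      rw [ΔZ, zpow_sub]
  | @mul m f g hf hg ihf ihg =>
    refine (Good.mul (Good.conj (Good.shift 1 hf) ihg) ihf).congr ?_
    funext n
    group
  | @inv m f hf ihf =>
    refine (Good.conj (Good.inv hf) (Good.inv ihf)).congr ?_
    funext n
    group
  | @conj k m φ f hφ hf ihφ ihf =>
    -- W := Δ(φ⁻¹) = conj_{φ⁻¹} (Δφ)⁻¹, Good (k+1)
    have hW : Good Gf (k+1) (fun n => (φ n)⁻¹ * ((φ (n+1)) * (φ n)⁻¹)⁻¹ * ((φ n)⁻¹)⁻¹ ) :=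
      Good.conj (Good.inv hφ) (Good.inv ihφ)
    have hcm : Good Gf (m + (k+1)) (fun n =>
        ⁅f n, (φ n)⁻¹ * ((φ (n+1)) * (φ n)⁻¹)⁻¹ * ((φ n)⁻¹)⁻¹⁆) := Good.comm hf hW
    refine (Good.conj (Good.shift 1 hφ) (Good.mul ihf (hcm.weaken (by omega)))).congr ?_
    funext n
    simp only [commutatorElement_def]
    group
  | @comm m₁ m₂ f g hf hg ihf ihg =>
    have T1 : Good Gf (m₁ + m₂ + 1) (fun n =>
        (f (n+1) * (f n)⁻¹) * ⁅f n, g (n+1) * (g n)⁻¹⁆ * ((f (n+1) * (f n)⁻¹))⁻¹) :=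
      (Good.conj ihf (Good.comm hf ihg)).weaken (by omega)
    have T2 : Good Gf (m₁ + m₂ + 1) (fun n =>
        ⁅(f (n+1) * (f n)⁻¹) * (g (n+1) * (g n)⁻¹), ⁅f n, g n⁆⁆) :=
      (Good.comm (Good.mul (Good.weaken (m' := 1) ihf (by omega))
        (Good.weaken (m' := 1) ihg (by omega))) (Good.comm hf hg)).weaken (by omega)
    have T3 : Good Gf (m₁ + m₂ + 1) (fun n =>
        ⁅f n, g n⁆ *
          (⁅f (n+1) * (f n)⁻¹, g (n+1) * (g n)⁻¹⁆ *
            ((g (n+1) * (g n)⁻¹) * ⁅f (n+1) * (f n)⁻¹, g n⁆ * ((g (n+1) * (g n)⁻¹))⁻¹)) *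
          (⁅f n, g n⁆)⁻¹) :=
      Good.conj (Good.comm hf hg)
        (Good.mul ((Good.comm ihf ihg).weaken (by omega))
          ((Good.conj ihg (Good.comm ihf hg)).weaken (by omega)))
    refine (Good.mul T1 (Good.mul T2 T3)).congr ?_
    funext n
    simp only [commutatorElement_def]
    group
  | @shift m f h hf ihf =>
    refine (Good.shift h ihf).congr ?_
    funext n
    have : n + h + 1 = n + 1 + h := by ring
    rw [this]
  | @weaken m m' f hf hle ihf =>
    exact ihf.weaken (by omega)

end Good

end TaylorProof

namespace TaylorProof

section Dn

variable {G : Type*} [Group G]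

/-- `T`-fold discrete derivative with step 1. -/
def Dn (T : ℕ) (f : ℤ → G) : ℤ → G := (List.replicate T (1:ℤ)).foldr discDeriv f

lemma Dn_zero (f : ℤ → G) : Dn 0 f = f := rfl

lemma Dn_succ (T : ℕ) (f : ℤ → G) : Dn (T+1) f = discDeriv 1 (Dn T f) := rfl

lemma Dn_succ' (T : ℕ) (f : ℤ → G) : Dn (T+1) f = Dn T (discDeriv 1 f) := by
  unfold Dn
  rw [List.replicate_succ', List.foldr_append]
  rfl

lemma discDeriv_one (f : ℤ → G) (n : ℤ) : discDeriv 1 f n = f (n+1) * (f n)⁻¹ := rfl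

lemma discDeriv_mul_central {P u : ℤ → G} (hu : ∀ n, u n ∈ Subgroup.center G) :
    discDeriv 1 (fun n => P n * u n) = fun n => discDeriv 1 P n * discDeriv 1 u n := by
  funext n
  simp only [discDeriv]
  have hz : ∀ g : G, g * (u (n+1) * (u n)⁻¹) = (u (n+1) * (u n)⁻¹) * g := by
    intro g
    exact (Subgroup.mem_center_iff.mp (mul_mem (hu (n+1)) (inv_mem (hu n))) g)
  calc P (n+1) * u (n+1) * (P n * u n)⁻¹
      = P (n+1) * ((u (n+1) * (u n)⁻¹) * (P n)⁻¹) := by group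
    _ = P (n+1) * ((P n)⁻¹ * (u (n+1) * (u n)⁻¹)) := by rw [hz ((P n)⁻¹)]
    _ = P (n+1) * (P n)⁻¹ * (u (n+1) * (u n)⁻¹) := by group

lemma Dn_mul_central (T : ℕ) :
    ∀ (P u : ℤ → G), (∀ n, u n ∈ Subgroup.center G) →
      Dn T (fun n => P n * u n) = fun n => Dn T P n * Dn T u n := by
  induction T with
  | zero => intro P u hu; rfl
  | succ T ih =>
    intro P u hu
    rw [Dn_succ', discDeriv_mul_central hu,
      ih (discDeriv 1 P) (discDeriv 1 u)
        (fun n => mul_mem (hu (n+1)) (inv_mem (hu n))),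
      ← Dn_succ', ← Dn_succ']

lemma Dn_pow (T : ℕ) (x : G) (p : ℤ → ℤ) :
    Dn T (fun n => x ^ p n) = fun n => x ^ (ΔZ^[T] p n) := by
  induction T generalizing p with
  | zero => rfl
  | succ T ih =>
    rw [Dn_succ']
    have h : discDeriv 1 (fun n => x ^ p n) = fun n => x ^ (ΔZ p n) := by
      funext n
      rw [discDeriv_one, ΔZ, zpow_sub]
    rw [h, ih (ΔZ p), ← Function.iterate_succ_apply]

lemma Good.iter {Gf : ℕ → Subgroup G} {m : ℕ} {f : ℤ → G} (hf : Good Gf m f) (T : ℕ) :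
    Good Gf (m + T) (Dn T f) := by
  induction T with
  | zero => exact hf
  | succ T ih => exact (ih.delta).congr (by rw [Dn_succ]; rfl)

lemma good_list_prod {Gf : ℕ → Subgroup G} {α : Type*} (l : List α) (F : α → ℤ → G)
    (h : ∀ a ∈ l, Good Gf 1 (F a)) :
    Good Gf 1 (fun n => (l.map (fun a => F a n)).prod) := by
  induction l with
  | nil => exact (Good.one 1).congr (by funext n; simp)
  | cons a t ih =>
    refine (Good.mul (h a List.mem_cons_self) (ih (fun b hb => h b (List.mem_cons_of_mem a hb)))).congr ?_
    funext n
    simp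

lemma foldr_discDeriv_map {H : Type*} [Group H] (π : G →* H) (f : ℤ → G) :
    ∀ hs : List ℤ, hs.foldr discDeriv (fun k => π (f k)) = fun n => π (hs.foldr discDeriv f n) := by
  intro hs
  induction hs generalizing f with
  | nil => rfl
  | cons h t ih =>
    show discDeriv h (t.foldr discDeriv (fun k => π (f k))) = _
    rw [ih f]
    funext n
    simp [discDeriv]

end Dn

end TaylorProof

namespace TaylorProof

universe u

theorem aux : ∀ (s : ℕ) {G : Type u} [Group G] (Gf : ℕ → Subgroup G),
    Gf 0 = ⊤ → Gf 1 = ⊤ → (∀ i, Gf (i + 1) ≤ Gf i) → (∀ i, s < i → Gf i = ⊥) →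
    (∀ i j, ⁅Gf i, Gf j⁆ ≤ Gf (i + j)) →
    ∀ (g : ℤ → G), IsPolySeq Gf g → IsPolySeq (fun i => Gf (i + 1)) g →
    ∀ (c : Fin (s + 1) → G), (∀ i, c i ∈ Gf i.val) →
    (∀ n : ℤ, g n = ((List.finRange (s + 1)).map (fun i => c i ^ zchoose n i.val)).prod) →
    ∀ i, c i ∈ Gf (i.val + 1) := by
  intro s
  induction s with
  | zero =>
    intro G _ Gf h0 h1 hmono hbot hcomm g hg hshift c hc hexp i
    have hi : i.val = 0 := by omega
    have : i.val + 1 = 1 := by omega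
    rw [this, h1]
    trivial
  | succ t IH =>
    intro G _ Gf h0 h1 hmono hbot hcomm g hg hshift c hc hexp
    haveI hN : (Gf (t+1)).Normal := ⟨fun x hx g => Gf_normal h1 hmono hcomm _ g x hx⟩
    -- Step 1: all coefficients below the top one, via the quotient by `Gf (t+1)`.
    have hlow : ∀ i : Fin (t + 1 + 1), i.val < t + 1 → c i ∈ Gf (i.val + 1) := by
      intro i hi
      set π := QuotientGroup.mk' (Gf (t+1)) with hπdef
      have hker : π.ker = Gf (t+1) := QuotientGroup.ker_mk' _
      have hsurj : Function.Surjective π := QuotientGroup.mk'_surjective _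
      have htrans : ∀ (K : ℕ → Subgroup G), IsPolySeq K g →
          IsPolySeq (fun j => (K j).map π) (fun n => π (g n)) := by
        intro K hK hs n
        rw [foldr_discDeriv_map]
        exact Subgroup.mem_map_of_mem π (hK hs n)
      have hclast : π (c (Fin.last (t+1))) = 1 := by
        rw [← MonoidHom.mem_ker, hker]
        simpa using hc (Fin.last (t+1))
      have key := IH (fun j => (Gf j).map π)
        (by show Subgroup.map π (Gf 0) = ⊤; rw [h0]; exact Subgroup.map_top_of_surjective _ hsurj)
        (by show Subgroup.map π (Gf 1) = ⊤; rw [h1]; exact Subgroup.map_top_of_surjective _ hsurj)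
        (fun j => Subgroup.map_mono (hmono j))
        (fun j hj => by
          rw [Subgroup.map_eq_bot_iff, hker]
          exact Gf_mono hmono hj)
        (fun a b => by
          rw [← Subgroup.map_commutator]
          exact Subgroup.map_mono (hcomm a b))
        (fun n => π (g n))
        (htrans Gf hg)
        (htrans (fun j => Gf (j+1)) hshift)
        (fun j => π (c j.castSucc))
        (fun j => Subgroup.mem_map_of_mem π (by simpa using hc j.castSucc))
        (by
          intro n
          show π (g n) = ((List.finRange (t+1)).map
            (fun j => π (c j.castSucc) ^ zchoose n j.val)).prod
          rw [hexp n, map_list_prod, List.map_map, List.finRange_succ_last,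
            List.map_append, List.map_map, List.prod_append]
          simp only [Function.comp_def, Fin.coe_castSucc, Fin.val_last, List.map_cons,
            List.map_nil, List.prod_cons, List.prod_nil, map_zpow, hclast, one_zpow, mul_one]
        )
        ⟨i.val, hi⟩
      have hcs : (⟨i.val, hi⟩ : Fin (t+1)).castSucc = i := by
        apply Fin.ext
        simp
      rw [hcs] at key
      rcases Subgroup.mem_map.mp key with ⟨y, hy, hyx⟩
      have hmem : y⁻¹ * c i ∈ Gf (t+1) := by
        rw [← hker, MonoidHom.mem_ker, map_mul, map_inv, hyx]
        simp
      have heq : c i = y * (y⁻¹ * c i) := by group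
      rw [heq]
      exact mul_mem hy (Gf_mono hmono (by omega) hmem)
    -- Step 2: the top coefficient.
    intro i
    by_cases hi : i.val < t + 1
    · exact hlow i hi
    · have hival : i.val = t + 1 := by omega
      have hlast : i = Fin.last (t+1) := by
        apply Fin.ext
        simp [hival]
      rw [hival, hbot (t+1+1) (by omega), Subgroup.mem_bot, hlast]
      -- split g = P * u with u the central top factor
      set F : Fin (t+1) → ℤ → G := fun j => fun n => c j.castSucc ^ zchoose n j.val with hFdef
      set P : ℤ → G := fun n => ((List.finRange (t+1)).map (fun j => F j n)).prod with hPdef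
      set uu : ℤ → G := fun n => c (Fin.last (t+1)) ^ zchoose n (t+1) with hudef
      have hsplit : g = fun n => P n * uu n := by
        funext n
        rw [hexp n, List.finRange_succ_last, List.map_append, List.map_map,
          List.prod_append, hPdef, hudef]
        simp only [Function.comp_def, Fin.coe_castSucc, Fin.val_last, List.map_cons,
          List.map_nil, List.prod_cons, List.prod_nil, mul_one, hFdef]
      have hcenter : ∀ x ∈ Gf (t+1), x ∈ Subgroup.center G := by
        intro x hx
        rw [Subgroup.mem_center_iff]
        intro y
        have hyx : ⁅y, x⁆ ∈ Gf (1 + (t+1)) :=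
          hcomm 1 (t+1) (Subgroup.commutator_mem_commutator (by rw [h1]; trivial) hx)
        rw [hbot (1 + (t+1)) (by omega), Subgroup.mem_bot] at hyx
        exact commutatorElement_eq_one_iff_commute.mp hyx
      have hclastmem : c (Fin.last (t+1)) ∈ Gf (t+1) := by simpa using hc (Fin.last (t+1))
      have hu : ∀ n, uu n ∈ Subgroup.center G := by
        intro n
        rw [hudef]
        exact Subgroup.zpow_mem _ (hcenter _ hclastmem) _
      have hg0 : Dn (t+1) g 0 = 1 := by
        have hval := hshift (List.replicate (t+1) (1:ℤ)) 0
        simp only [List.length_replicate] at hval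
        rw [hbot (t+1+1) (by omega), Subgroup.mem_bot] at hval
        exact hval
      have hPgood : Good Gf 1 P := by
        rw [hPdef]
        refine good_list_prod _ F (fun j _ => ?_)
        rw [hFdef]
        have hxm : c j.castSucc ∈ Gf (j.val + 1) := by
          have := hlow j.castSucc (by simpa using j.isLt)
          simpa using this
        exact Good.pow (c j.castSucc) (fun n => zchoose n j.val) hxm (degLe_zchoose _)
          (by omega)
      have hPD : Dn (t+1) P 0 = 1 := by
        have hgood := hPgood.iter (t+1)
        have hval := hgood.values h1 hmono hcomm 0
        rw [hbot (1+(t+1)) (by omega), Subgroup.mem_bot] at hval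
        exact hval
      have huD : Dn (t+1) uu 0 = c (Fin.last (t+1)) := by
        rw [hudef, Dn_pow, iter_ΔZ_zchoose]
        simp [zchoose_zero_right]
      have hDsplit : Dn (t+1) g 0 = Dn (t+1) P 0 * Dn (t+1) uu 0 := by
        rw [hsplit, Dn_mul_central (t+1) P uu hu]
      rw [hg0, hPD, huD, one_mul] at hDsplit
      exact hDsplit.symm

end TaylorProof

theorem taylor_coeffs_of_shifted_poly {G : Type*} [Group G] (s : ℕ)
    (Gf : ℕ → Subgroup G)
    (h0 : Gf 0 = ⊤) (h1 : Gf 1 = ⊤)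
    (hmono : ∀ i, Gf (i + 1) ≤ Gf i)
    (hbot : ∀ i, s < i → Gf i = ⊥)
    (hcomm : ∀ i j, ⁅Gf i, Gf j⁆ ≤ Gf (i + j))
    (g : ℤ → G) (hg : IsPolySeq Gf g)
    (hshift : IsPolySeq (fun i => Gf (i + 1)) g)
    (c : Fin (s + 1) → G) (hc : ∀ i, c i ∈ Gf i.val)
    (hexp : ∀ n : ℤ,
      g n = ((List.finRange (s + 1)).map (fun i => c i ^ zchoose n i.val)).prod) :
    ∀ i, c i ∈ Gf (i.val + 1) :=
  TaylorProof.aux s Gf h0 h1 hmono hbot hcomm g hg hshift c hc hexp
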